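/- If A is a symmetric matrix of the block form A = [[0, C],[Cᵀ, 0]], then its group inverse is A# = [[0, (CCᵀ)# C],[Cᵀ (CCᵀ)#, 0]]. Consequently, the group inverse of a bipartite weighted graph is bipartite. -/
import Mathlib


open SimpleGraph Matrix

/-- `X` is the group inverse of `A`. -/
def IsGroupInverse {n : Type*} [Fintype n] (A X : Matrix n n ℝ) : Prop :=
  A * X * A = A ∧ X * A * X = X ∧ A * X = X * A

/-- A matching of a graph: a set of pairwise non-incident edges. -/
def IsMatching {V : Type*} (G : SimpleGraph V) (M : Finset (Sym2 V)) : Prop :=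
  (↑M : Set (Sym2 V)) ⊆ G.edgeSet ∧
    ∀ e ∈ M, ∀ f ∈ M, e ≠ f → ∀ v : V, ¬(v ∈ e ∧ v ∈ f)

/-- A maximum matching: a matching of maximum cardinality. -/
def IsMaxMatching {V : Type*} (G : SimpleGraph V) (M : Finset (Sym2 V)) : Prop :=
  IsMatching G M ∧ ∀ N : Finset (Sym2 V), IsMatching G N → N.card ≤ M.card

/-- A nonempty list of edges alternately in and out of `M`,
beginning and ending with edges of `M`. -/
def IsAltEdgeList {V : Type*} (M : Set (Sym2 V)) : List (Sym2 V) → Prop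
  | [] => False
  | [e] => e ∈ M
  | e :: f :: rest => e ∈ M ∧ f ∉ M ∧ IsAltEdgeList M rest

/-- A pair of vertices is maximally matchable if they are joined by a path that is
alternating with respect to some maximum matching. -/
def MaxMatchable {V : Type*} (G : SimpleGraph V) (u v : V) : Prop :=
  ∃ (p : G.Walk u v) (M : Finset (Sym2 V)),
    p.IsPath ∧ IsMaxMatching G M ∧ IsAltEdgeList (↑M) p.edges

/-- `G` is a star: some center `c` is adjacent to exactly the other vertices,
and there are no other edges. -/
def IsStar {V : Type*} (G : SimpleGraph V) : Prop :=
  ∃ c : V, ∀ u v : V, G.Adj u v ↔ ((u = c ∧ v ≠ c) ∨ (v = c ∧ u ≠ c))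

/-- The class 𝕋: trees with at least one non-pendant vertex in which every
non-pendant vertex is adjacent to a pendant vertex. -/
def InClassT {V : Type*} [Fintype V] (T : SimpleGraph V) [DecidableRel T.Adj] : Prop :=
  T.IsTree ∧ (∃ v, T.degree v ≠ 1) ∧
    ∀ v, T.degree v ≠ 1 → ∃ u, T.Adj v u ∧ T.degree u = 1

/-- The number of pendant neighbours of `v`. -/
def pendantNbrs {V : Type*} [Fintype V] [DecidableEq V] (T : SimpleGraph V)
    [DecidableRel T.Adj] (v : V) : ℕ :=
  ((T.neighborFinset v).filter fun u => T.degree u = 1).card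

/-- The group inverse of a symmetric matrix of the block form
[[0, C],[Cᵀ, 0]] is [[0, (CCᵀ)# C],[Cᵀ (CCᵀ)#, 0]]; consequently any group inverse
of such a (bipartite) matrix has the same bipartite zero pattern. -/
lemma aux_mul_transpose_self_eq_zero {a b : Type*} [Fintype b]
    (M : Matrix a b ℝ) (h : M * Mᵀ = 0) : M = 0 := by
  have := (Matrix.self_mul_conjTranspose_eq_zero (A := M))
  rw [Matrix.conjTranspose_eq_transpose_of_trivial] at this
  exact this.mp h

lemma aux_gi_unique {n : Type*} [Fintype n] {A B C : Matrix n n ℝ}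
    (hB : IsGroupInverse A B) (hC : IsGroupInverse A C) : B = C := by
  obtain ⟨hB1, hB2, hB3⟩ := hB
  obtain ⟨hC1, hC2, hC3⟩ := hC
  have hACC : A * (C * C) = C := by
    rw [← mul_assoc, hC3, hC2]
  have h6 : A * B * C = C := by
    conv_lhs => rw [← hACC]
    rw [← mul_assoc, hB1, hACC]
  have hBBA : B * B * A = B := by
    rw [mul_assoc, ← hB3, ← mul_assoc, hB2]
  have hC1' : A * (C * A) = A := by rw [← mul_assoc, hC1]
  have h5 : B * (C * A) = B := by
    conv_lhs => rw [← hBBA]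
    rw [mul_assoc, mul_assoc, hC1', ← hB3, ← mul_assoc, hB2]
  calc B = B * (C * A) := h5.symm
    _ = B * (A * C) := by rw [← hC3]
    _ = A * B * C := by rw [← mul_assoc, ← hB3]
    _ = C := h6

lemma aux_mulBY {k m p : Type*} [Fintype k] [Fintype m] [Fintype p]
    (C : Matrix k m ℝ) (Y : Matrix k k ℝ)
    (h1 : C * Cᵀ * Y * (C * Cᵀ) = C * Cᵀ) (Z : Matrix k p ℝ) :
    C * (Cᵀ * (Y * (C * (Cᵀ * Z)))) = C * (Cᵀ * Z) := by
  calc C * (Cᵀ * (Y * (C * (Cᵀ * Z)))) = (C * Cᵀ * Y * (C * Cᵀ)) * Z := by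
        simp only [Matrix.mul_assoc, mul_assoc]
    _ = (C * Cᵀ) * Z := by rw [h1]
    _ = C * (Cᵀ * Z) := by rw [Matrix.mul_assoc]

lemma aux_key {k m : Type*} [Fintype k] [Fintype m]
    (C : Matrix k m ℝ) (Y : Matrix k k ℝ)
    (h1 : C * Cᵀ * Y * (C * Cᵀ) = C * Cᵀ)
    (h1t : C * Cᵀ * Yᵀ * (C * Cᵀ) = C * Cᵀ) :
    C * Cᵀ * Y * C = C := by
  have t1 : (C * Cᵀ * Y * C) * (C * Cᵀ * Y * C)ᵀ = C * Cᵀ := by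
    simp only [transpose_mul, transpose_transpose, Matrix.mul_assoc]
    rw [aux_mulBY C Y (by simpa only [Matrix.mul_assoc, mul_assoc] using h1)]
    simpa only [Matrix.mul_assoc, mul_assoc] using h1t
  have t2 : (C * Cᵀ * Y * C) * Cᵀ = C * Cᵀ := by rw [Matrix.mul_assoc, h1]
  have t3 : C * (C * Cᵀ * Y * C)ᵀ = C * Cᵀ := by
    simp only [transpose_mul, transpose_transpose, Matrix.mul_assoc]
    simpa only [Matrix.mul_assoc, mul_assoc] using h1t
  have hM : (C * Cᵀ * Y * C - C) * (C * Cᵀ * Y * C - C)ᵀ = 0 := by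
    rw [transpose_sub, Matrix.sub_mul, Matrix.mul_sub, Matrix.mul_sub, t1, t2, t3]
    simp
  have := aux_mul_transpose_self_eq_zero _ hM
  exact sub_eq_zero.mp this

theorem group_inverse_bipartite {k m : Type*} [Fintype k] [Fintype m]
    (C : Matrix k m ℝ) (Y : Matrix k k ℝ)
    (hY : IsGroupInverse (C * Cᵀ) Y) :
    IsGroupInverse (Matrix.fromBlocks 0 C Cᵀ 0)
      (Matrix.fromBlocks 0 (Y * C) (Cᵀ * Y) 0) ∧
    ∀ X : Matrix (k ⊕ m) (k ⊕ m) ℝ,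
      IsGroupInverse (Matrix.fromBlocks 0 C Cᵀ 0) X →
        (∀ i j : k, X (Sum.inl i) (Sum.inl j) = 0) ∧
        (∀ i j : m, X (Sum.inr i) (Sum.inr j) = 0) := by
  obtain ⟨h1, h2, h3⟩ := hY
  -- h1 : C * Cᵀ * Y * (C * Cᵀ) = C * Cᵀ, h2 : Y * (C * Cᵀ) * Y = Y, h3 : C * Cᵀ * Y = Y * (C * Cᵀ)
  have h1t : C * Cᵀ * Yᵀ * (C * Cᵀ) = C * Cᵀ := by
    have := congrArg Matrix.transpose h1
    simpa only [transpose_mul, transpose_transpose, Matrix.mul_assoc, mul_assoc] using this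
  have hKey1 : C * Cᵀ * Y * C = C := aux_key C Y h1 h1t
  have hKey1' : C * Cᵀ * Yᵀ * C = C :=
    aux_key C Yᵀ h1t (by rw [transpose_transpose]; exact h1)
  have hKey2 : Cᵀ * Y * (C * Cᵀ) = Cᵀ := by
    have := congrArg Matrix.transpose hKey1'
    simpa only [transpose_mul, transpose_transpose, Matrix.mul_assoc, mul_assoc] using this
  have hAX : Matrix.fromBlocks 0 C Cᵀ 0 * Matrix.fromBlocks 0 (Y * C) (Cᵀ * Y) 0 =
      Matrix.fromBlocks (Y * (C * Cᵀ)) 0 0 (Cᵀ * (Y * C)) := by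
    rw [Matrix.fromBlocks_multiply]
    simp only [Matrix.zero_mul, Matrix.mul_zero, add_zero, zero_add]
    rw [← Matrix.mul_assoc, h3]
  have hXA : Matrix.fromBlocks 0 (Y * C) (Cᵀ * Y) 0 * Matrix.fromBlocks 0 C Cᵀ 0 =
      Matrix.fromBlocks (Y * (C * Cᵀ)) 0 0 (Cᵀ * (Y * C)) := by
    rw [Matrix.fromBlocks_multiply]
    simp only [Matrix.zero_mul, Matrix.mul_zero, add_zero, zero_add]
    rw [Matrix.mul_assoc, Matrix.mul_assoc]
  have hGI : IsGroupInverse (Matrix.fromBlocks 0 C Cᵀ 0)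
      (Matrix.fromBlocks 0 (Y * C) (Cᵀ * Y) 0) := by
    refine ⟨?_, ?_, hAX.trans hXA.symm⟩
    · rw [hAX, Matrix.fromBlocks_multiply]
      simp only [Matrix.zero_mul, Matrix.mul_zero, add_zero, zero_add]
      rw [← h3, hKey1, ← Matrix.mul_assoc Cᵀ Y C, Matrix.mul_assoc (Cᵀ * Y) C Cᵀ, hKey2]
    · rw [hXA, Matrix.fromBlocks_multiply]
      simp only [Matrix.zero_mul, Matrix.mul_zero, add_zero, zero_add]
      have inner : Y * C * (Cᵀ * Y) = Y := by
        rw [Matrix.mul_assoc Y C (Cᵀ * Y), ← Matrix.mul_assoc C Cᵀ Y,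
          ← Matrix.mul_assoc Y (C * Cᵀ) Y, h2]
      rw [← Matrix.mul_assoc (Y * (C * Cᵀ)) Y C, h2, Matrix.mul_assoc Cᵀ (Y * C) (Cᵀ * Y), inner]
  refine ⟨hGI, fun X hX => ?_⟩
  have hXeq : X = Matrix.fromBlocks 0 (Y * C) (Cᵀ * Y) 0 := aux_gi_unique hX hGI
  subst hXeq
  exact ⟨fun i j => rfl, fun i j => rfl⟩
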